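/- Let X be a random variable with Pr(X > 0) = 1 and tail distribution F̄(x) = Pr(X > x). If F̄ is log-concave on [0, ∞) and E[X²] < ∞, then E[X²] ≤ 2 (E[X])²; equivalently Var(X) ≤ (E[X])², so the coefficient of variation C_v = σ/μ satisfies C_v ≤ 1. If F̄ is log-convex on [0, ∞) and E[X²] < ∞, then E[X²] ≥ 2 (E[X])², so C_v ≥ 1. -/

import Mathlib

open MeasureTheory ProbabilityTheory

open Set in
/-- `f` is log-concave on `D`: `f(θx + (1−θ)y) ≥ f(x)^θ f(y)^{1−θ}`. -/
def LogConcaveOn (D : Set ℝ) (f : ℝ → ℝ) : Prop :=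
  ∀ ⦃x⦄, x ∈ D → ∀ ⦃y⦄, y ∈ D → ∀ ⦃θ : ℝ⦄, θ ∈ Set.Icc (0 : ℝ) 1 →
    f x ^ θ * f y ^ (1 - θ) ≤ f (θ * x + (1 - θ) * y)

/-- `f` is log-convex on `D`: `f(θx + (1−θ)y) ≤ f(x)^θ f(y)^{1−θ}`. -/
def LogConvexOn (D : Set ℝ) (f : ℝ → ℝ) : Prop :=
  ∀ ⦃x⦄, x ∈ D → ∀ ⦃y⦄, y ∈ D → ∀ ⦃θ : ℝ⦄, θ ∈ Set.Icc (0 : ℝ) 1 →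
    f (θ * x + (1 - θ) * y) ≤ f x ^ θ * f y ^ (1 - θ)

open Set
open scoped ENNReal NNReal

private lemma aux_rpow_split {G : ℝ → ℝ} (hnn : ∀ x, 0 ≤ G x) {s u : ℝ}
    (hs : 0 ≤ s) (hu : 0 ≤ u) (hc : 0 < s + u) :
    G (s + u) = G (s + u) ^ (s / (s + u)) * G (s + u) ^ (u / (s + u)) := by
  have hsum : s / (s + u) + u / (s + u) = 1 := by field_simp
  rw [← Real.rpow_add' (hnn _) (by rw [hsum]; norm_num), hsum, Real.rpow_one]

private lemma aux_theta_mem {s u : ℝ} (hs : 0 ≤ s) (hu : 0 ≤ u) (hc : 0 < s + u) :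
    s / (s + u) ∈ Set.Icc (0 : ℝ) 1 :=
  ⟨div_nonneg hs hc.le, by rw [div_le_one hc]; linarith⟩

private lemma nbu_of_logConcave {G : ℝ → ℝ} (h : LogConcaveOn (Set.Ici 0) G)
    (hnn : ∀ x, 0 ≤ G x) (h0 : G 0 = 1) {s u : ℝ} (hs : 0 ≤ s) (hu : 0 ≤ u) :
    G (s + u) ≤ G s * G u := by
  rcases eq_or_lt_of_le (add_nonneg hs hu) with hc | hc
  · have hs0 : s = 0 := by linarith
    have hu0 : u = 0 := by linarith
    simp [hs0, hu0, h0]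
  · have hmem : (s + u) ∈ Set.Ici (0 : ℝ) := hc.le
    have h1 : G (s + u) ^ (s / (s + u)) ≤ G s := by
      have h1 := h hmem (mem_Ici.mpr le_rfl) (aux_theta_mem hs hu hc)
      rw [h0, Real.one_rpow, mul_one] at h1
      simpa [div_mul_cancel₀ s hc.ne'] using h1
    have h2 : G (s + u) ^ (u / (s + u)) ≤ G u := by
      have hθu : u / (s + u) ∈ Set.Icc (0 : ℝ) 1 := by
        rw [add_comm s u]; exact aux_theta_mem hu hs (by linarith)
      have h2 := h hmem (mem_Ici.mpr le_rfl) hθu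
      rw [h0, Real.one_rpow, mul_one] at h2
      simpa [div_mul_cancel₀ u hc.ne'] using h2
    calc G (s + u) = G (s + u) ^ (s / (s + u)) * G (s + u) ^ (u / (s + u)) :=
          aux_rpow_split hnn hs hu hc
      _ ≤ G s * G u :=
          mul_le_mul h1 h2 (Real.rpow_nonneg (hnn _) _) (hnn s)

private lemma nwu_of_logConvex {G : ℝ → ℝ} (h : LogConvexOn (Set.Ici 0) G)
    (hnn : ∀ x, 0 ≤ G x) (h0 : G 0 = 1) {s u : ℝ} (hs : 0 ≤ s) (hu : 0 ≤ u) :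
    G s * G u ≤ G (s + u) := by
  rcases eq_or_lt_of_le (add_nonneg hs hu) with hc | hc
  · have hs0 : s = 0 := by linarith
    have hu0 : u = 0 := by linarith
    simp [hs0, hu0, h0]
  · have hmem : (s + u) ∈ Set.Ici (0 : ℝ) := hc.le
    have h1 : G s ≤ G (s + u) ^ (s / (s + u)) := by
      have h1 := h hmem (mem_Ici.mpr le_rfl) (aux_theta_mem hs hu hc)
      rw [h0, Real.one_rpow, mul_one] at h1
      simpa [div_mul_cancel₀ s hc.ne'] using h1
    have h2 : G u ≤ G (s + u) ^ (u / (s + u)) := by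
      have hθu : u / (s + u) ∈ Set.Icc (0 : ℝ) 1 := by
        rw [add_comm s u]; exact aux_theta_mem hu hs (by linarith)
      have h2 := h hmem (mem_Ici.mpr le_rfl) hθu
      rw [h0, Real.one_rpow, mul_one] at h2
      simpa [div_mul_cancel₀ u hc.ne'] using h2
    calc G s * G u ≤ G (s + u) ^ (s / (s + u)) * G (s + u) ^ (u / (s + u)) :=
          mul_le_mul h1 h2 (hnn u) (Real.rpow_nonneg (hnn _) _)
      _ = G (s + u) := (aux_rpow_split hnn hs hu hc).symm

/-- The double-integral / layercake identity
`∫_{s>0} ∫_{u>0} F(s+u) du ds = ∫_{t>0} t F(t) dt`. -/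
private lemma double_lintegral_eq (F : ℝ → ℝ≥0∞) (hF : Measurable F) :
    ∫⁻ s in Ioi (0:ℝ), ∫⁻ u in Ioi (0:ℝ), F (s + u) =
      ∫⁻ t in Ioi (0:ℝ), F t * ENNReal.ofReal t := by
  have step1 : ∀ s : ℝ, 0 ≤ s →
      ∫⁻ u in Ioi (0:ℝ), F (s + u) = ∫⁻ t in Ioi (0:ℝ), (Ioi s).indicator F t := by
    intro s hs
    rw [setLIntegral_indicator measurableSet_Ioi, Set.Ioi_inter_Ioi,
      sup_eq_left.mpr hs, ← lintegral_indicator measurableSet_Ioi,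
      ← lintegral_indicator measurableSet_Ioi,
      ← lintegral_add_right_eq_self ((Ioi s).indicator F) s]
    refine lintegral_congr fun u => ?_
    by_cases hu : 0 < u <;>
      simp [Set.indicator_apply, hu, lt_add_iff_pos_left, add_comm s u]
  calc ∫⁻ s in Ioi (0:ℝ), ∫⁻ u in Ioi (0:ℝ), F (s + u)
      = ∫⁻ s in Ioi (0:ℝ), ∫⁻ t in Ioi (0:ℝ), (Ioi s).indicator F t :=
        setLIntegral_congr_fun measurableSet_Ioi
          (fun s hs => step1 s (le_of_lt hs))
    _ = ∫⁻ t in Ioi (0:ℝ), ∫⁻ s in Ioi (0:ℝ), (Ioi s).indicator F t := by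
        refine lintegral_lintegral_swap ?_
        have hmbl : Measurable fun p : ℝ × ℝ => if p.1 < p.2 then F p.2 else 0 :=
          Measurable.ite (measurableSet_lt measurable_fst measurable_snd)
            (hF.comp measurable_snd) measurable_const
        have : (Function.uncurry fun s t => (Ioi s).indicator F t) =
            fun p : ℝ × ℝ => if p.1 < p.2 then F p.2 else 0 := by
          funext p
          simp [Function.uncurry, Set.indicator_apply]
        rw [this]
        exact hmbl.aemeasurable
    _ = ∫⁻ t in Ioi (0:ℝ), F t * ENNReal.ofReal t := by
        refine setLIntegral_congr_fun measurableSet_Ioi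
          (fun t ht => ?_)
        have heq : ∀ s : ℝ, (Ioi s).indicator F t = (Iio t).indicator (fun _ => F t) s := by
          intro s; simp [Set.indicator_apply]
        simp_rw [heq]
        rw [setLIntegral_indicator measurableSet_Iio, Set.Iio_inter_Ioi,
          setLIntegral_const, Real.volume_Ioo, sub_zero]

/-- Coefficient of variation: for an a.s. positive random variable `X` with finite second
moment, a log-concave tail gives `E[X²] ≤ 2(E[X])²` (equivalently `Var(X) ≤ (E[X])²`,
i.e. `C_v ≤ 1`), and a log-convex tail gives `E[X²] ≥ 2(E[X])²` (i.e. `C_v ≥ 1`). -/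
theorem coefficient_of_variation {Ω : Type*} [MeasureSpace Ω]
    [IsProbabilityMeasure (ℙ : Measure Ω)]
    (X : Ω → ℝ) (hmeas : Measurable X) (hpos : ℙ {ω | 0 < X ω} = 1)
    (hsq : Integrable (fun ω => X ω ^ 2) ℙ) :
    (LogConcaveOn (Set.Ici 0) (fun x => (ℙ {ω | x < X ω}).toReal) →
      ∫ ω : Ω, X ω ^ 2 ∂(ℙ : Measure Ω) ≤ 2 * (∫ ω : Ω, X ω ∂(ℙ : Measure Ω)) ^ 2) ∧
    (LogConvexOn (Set.Ici 0) (fun x => (ℙ {ω | x < X ω}).toReal) →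
      2 * (∫ ω : Ω, X ω ∂(ℙ : Measure Ω)) ^ 2 ≤ ∫ ω : Ω, X ω ^ 2 ∂(ℙ : Measure Ω)) := by
  set F : ℝ → ℝ≥0∞ := fun t => ℙ {ω | t < X ω} with hFdef
  set I : ℝ≥0∞ := ∫⁻ t in Ioi (0:ℝ), F t with hIdef
  set L2 : ℝ≥0∞ := ∫⁻ ω, ENNReal.ofReal (X ω ^ 2) ∂ℙ with hL2def
  -- a.e. positivity
  have hposset : MeasurableSet {ω | 0 < X ω} := measurableSet_lt measurable_const hmeas
  have hae : ∀ᵐ ω ∂(ℙ : Measure Ω), 0 < X ω := by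
    rw [ae_iff]
    have hcompl : {ω | ¬ 0 < X ω} = {ω | 0 < X ω}ᶜ := by ext ω; simp
    rw [hcompl, measure_compl hposset (measure_ne_top _ _), hpos]
    simp
  have haenn : ∀ᵐ ω ∂(ℙ : Measure Ω), 0 ≤ X ω := hae.mono fun ω h => h.le
  -- integrability of X
  have hX1 : Integrable X ℙ := by
    have h1 : Integrable (fun ω => (X ω ^ 2 + 1) / 2) ℙ :=
      (hsq.add (integrable_const 1)).div_const 2
    refine h1.mono' hmeas.aestronglyMeasurable (Filter.Eventually.of_forall fun ω => ?_)
    rw [Real.norm_eq_abs]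
    nlinarith [sq_nonneg (|X ω| - 1), abs_nonneg (X ω), sq_abs (X ω)]
  -- basic facts about the tail function
  have hFanti : Antitone F := fun a b hab =>
    measure_mono fun ω h => lt_of_le_of_lt hab h
  have hFmeas : Measurable F := hFanti.measurable
  have hFne : ∀ t, F t ≠ ∞ := fun t => measure_ne_top _ _
  have hF0 : F 0 = 1 := hpos
  -- layer cake for X
  have hLC1 : ∫⁻ ω, ENNReal.ofReal (X ω) ∂ℙ = I :=
    lintegral_eq_lintegral_meas_lt ℙ haenn hmeas.aemeasurable
  -- layer cake for X²
  have hLC2 : L2 = ∫⁻ t in Ioi (0:ℝ), F t * ENNReal.ofReal (2 * t) := by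
    have key := lintegral_comp_eq_lintegral_meas_lt_mul ℙ (f := X) (g := fun t => 2 * t)
      haenn hmeas.aemeasurable
      (fun t ht => ((continuous_const.mul continuous_id).intervalIntegrable 0 t))
      (by
        filter_upwards [self_mem_ae_restrict (measurableSet_Ioi : MeasurableSet (Ioi (0:ℝ)))]
          with t ht
        have : (0:ℝ) < t := ht
        linarith)
    rw [hL2def, ← key]
    refine lintegral_congr fun ω => ?_
    congr 1
    rw [intervalIntegral.integral_const_mul, integral_id]
    ring
  have h2D : ∫⁻ t in Ioi (0:ℝ), F t * ENNReal.ofReal (2 * t) =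
      2 * ∫⁻ t in Ioi (0:ℝ), F t * ENNReal.ofReal t := by
    rw [← lintegral_const_mul' 2 _ (by norm_num : (2:ℝ≥0∞) ≠ ∞)]
    refine lintegral_congr fun t => ?_
    rw [ENNReal.ofReal_mul (by norm_num : (0:ℝ) ≤ 2)]
    have h2 : ENNReal.ofReal (2:ℝ) = 2 := by norm_num
    rw [h2]; ring
  -- finiteness
  have hIfin : I ≠ ∞ := by
    rw [← hLC1]
    refine ne_of_lt (lt_of_le_of_lt (lintegral_mono fun ω => ?_) hX1.hasFiniteIntegral)
    exact Real.ofReal_le_enorm (X ω)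
  have hL2fin : L2 ≠ ∞ := by
    refine ne_of_lt (lt_of_le_of_lt (lintegral_mono fun ω => ?_) hsq.hasFiniteIntegral)
    exact Real.ofReal_le_enorm (X ω ^ 2)
  -- integral representations
  have hEX : ∫ ω, X ω ∂ℙ = I.toReal := by
    rw [integral_eq_lintegral_of_nonneg_ae haenn hmeas.aestronglyMeasurable, hLC1]
  have hEX2 : ∫ ω, X ω ^ 2 ∂ℙ = L2.toReal := by
    rw [integral_eq_lintegral_of_nonneg_ae (Filter.Eventually.of_forall fun ω => sq_nonneg _)
      (hmeas.pow_const 2).aestronglyMeasurable]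
  -- the double integral identity
  have hD := double_lintegral_eq F hFmeas
  -- product of tail integrals
  have hprod : ∫⁻ s in Ioi (0:ℝ), ∫⁻ u in Ioi (0:ℝ), F s * F u = I * I := by
    have : ∀ s : ℝ, ∫⁻ u in Ioi (0:ℝ), F s * F u = F s * I := fun s =>
      lintegral_const_mul' (F s) F (hFne s)
    simp_rw [this]
    exact lintegral_mul_const' I F hIfin
  have hG0 : (fun x => (ℙ {ω | x < X ω}).toReal) 0 = 1 := by
    simp only [hF0 ▸ (rfl : F 0 = ℙ {ω | (0:ℝ) < X ω})]
    rw [hpos]; simp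
  have h2Ifin : (2 : ℝ≥0∞) * I ^ 2 ≠ ∞ :=
    ENNReal.mul_ne_top (by norm_num) (ENNReal.pow_ne_top hIfin)
  have htor : ((2 : ℝ≥0∞) * I ^ 2).toReal = 2 * I.toReal ^ 2 := by
    rw [ENNReal.toReal_mul, ENNReal.toReal_pow]
    norm_num
  constructor
  · intro hcc
    have hnbu : ∀ s ∈ Ioi (0:ℝ), ∀ u ∈ Ioi (0:ℝ), F (s + u) ≤ F s * F u := by
      intro s hs u hu
      have hreal := nbu_of_logConcave hcc (fun x => ENNReal.toReal_nonneg) hG0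
        (le_of_lt hs) (le_of_lt hu)
      have hmul : (F s * F u) ≠ ∞ := ENNReal.mul_ne_top (hFne s) (hFne u)
      rw [← ENNReal.toReal_mul] at hreal
      exact (ENNReal.toReal_le_toReal (hFne _) hmul).mp hreal
    have hle : ∫⁻ s in Ioi (0:ℝ), ∫⁻ u in Ioi (0:ℝ), F (s + u) ≤ I * I := by
      rw [← hprod]
      refine setLIntegral_mono' measurableSet_Ioi fun s hs => ?_
      exact setLIntegral_mono' measurableSet_Ioi fun u hu => hnbu s hs u hu
    have key : L2 ≤ 2 * I ^ 2 := by
      rw [hLC2, h2D, ← hD, sq]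
      exact mul_le_mul_right hle 2
    rw [hEX, hEX2, ← htor]
    exact ENNReal.toReal_mono h2Ifin key
  · intro hcv
    have hnwu : ∀ s ∈ Ioi (0:ℝ), ∀ u ∈ Ioi (0:ℝ), F s * F u ≤ F (s + u) := by
      intro s hs u hu
      have hreal := nwu_of_logConvex hcv (fun x => ENNReal.toReal_nonneg) hG0
        (le_of_lt hs) (le_of_lt hu)
      have hmul : (F s * F u) ≠ ∞ := ENNReal.mul_ne_top (hFne s) (hFne u)
      rw [← ENNReal.toReal_mul] at hreal
      exact (ENNReal.toReal_le_toReal hmul (hFne _)).mp hreal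
    have hle : I * I ≤ ∫⁻ s in Ioi (0:ℝ), ∫⁻ u in Ioi (0:ℝ), F (s + u) := by
      rw [← hprod]
      refine setLIntegral_mono' measurableSet_Ioi fun s hs => ?_
      exact setLIntegral_mono' measurableSet_Ioi fun u hu => hnwu s hs u hu
    have key : 2 * I ^ 2 ≤ L2 := by
      rw [hLC2, h2D, ← hD, sq]
      exact mul_le_mul_right hle 2
    rw [hEX, hEX2, ← htor]
    exact ENNReal.toReal_mono hL2fin key
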